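/- Let (Ω, 𝔉, ℙ) be a probability space, m a positive integer, X : Ω → E a random element, and u₁,...,u_m i.i.d. Uniform(0,1) random variables independent of X. Let ℛ₊(x) ⊆ {1,...,m} and R̂_j(x) ∈ {1,2,...,m} be measurable functions of x ∈ E, and define R(x,u) = max{r ∈ {0,1,...,m} : |{j ∈ ℛ₊(x) : u_j ≤ r/R̂_j(x)}| ≥ r}. Then for every fixed i ∈ {1,...,m}: E[ 1{i ∈ ℛ₊(X)} · 1{u_i ≤ R(X,u)/R̂_i(X)} / max(R(X,u),1) ] ≤ E[ 1{i ∈ ℛ₊(X)} / R̂_i(X) ]. -/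

import Mathlib

open MeasureTheory ProbabilityTheory Classical

/-- The pruned rejection count
`R(x,u) = max {r ∈ {0,…,m} : |{j ∈ ℛ₊(x) : u_j ≤ r / R̂_j(x)}| ≥ r}` of the secondary BH-type
procedure applied to the auxiliary uniforms. -/
noncomputable def pruneCount {m : ℕ} (Rplus : Finset (Fin m)) (Rhat : Fin m → ℕ)
    (u : Fin m → ℝ) : ℕ :=
  Nat.findGreatest
    (fun r => r ≤ (Rplus.filter (fun j => u j ≤ (r : ℝ) / (Rhat j : ℝ))).card) m

/-! ### Auxiliary deterministic lemmas -/

lemma pruneCount_le' {m : ℕ} (S : Finset (Fin m)) (R : Fin m → ℕ) (u : Fin m → ℝ) :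
    pruneCount S R u ≤ m := Nat.findGreatest_le m

lemma pruneCount_spec' {m : ℕ} (S : Finset (Fin m)) (R : Fin m → ℕ) (u : Fin m → ℝ)
    (h : pruneCount S R u ≠ 0) :
    pruneCount S R u
      ≤ (S.filter (fun j => u j ≤ (pruneCount S R u : ℝ) / (R j : ℝ))).card :=
  Nat.findGreatest_of_ne_zero
    (P := fun r => r ≤ (S.filter (fun j => u j ≤ (r : ℝ) / (R j : ℝ))).card) rfl h

lemma le_pruneCount' {m : ℕ} {S : Finset (Fin m)} {R : Fin m → ℕ} {u : Fin m → ℝ} {r : ℕ}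
    (hr : r ≤ m) (h : r ≤ (S.filter (fun j => u j ≤ (r : ℝ) / (R j : ℝ))).card) :
    r ≤ pruneCount S R u :=
  Nat.le_findGreatest hr h

lemma pruneCount_anti' {m : ℕ} (S : Finset (Fin m)) (R : Fin m → ℕ)
    {u v : Fin m → ℝ} (h : ∀ j, v j ≤ u j) :
    pruneCount S R u ≤ pruneCount S R v := by
  refine Nat.findGreatest_mono (fun r hr => le_trans hr (Finset.card_le_card ?_)) le_rfl
  intro j hj
  simp only [Finset.mem_filter] at hj ⊢
  exact ⟨hj.1, le_trans (h j) hj.2⟩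

/-- The step-up procedure lemma: replacing `u i` by `0` does not change the rejection count on
the event that `i` is rejected. -/
lemma pruneCount_update_zero' {m : ℕ} {S : Finset (Fin m)} {R : Fin m → ℕ} {u : Fin m → ℝ}
    {i : Fin m} (hi : i ∈ S) (hc : 0 < R i) (h0 : 0 ≤ u i)
    (hrej : u i ≤ (pruneCount S R u : ℝ) / (R i : ℝ)) :
    pruneCount S R (Function.update u i 0) = pruneCount S R u := by
  set Rt := pruneCount S R u with hRt
  set R0 := pruneCount S R (Function.update u i 0) with hR0
  have hle : Rt ≤ R0 := by
    refine pruneCount_anti' S R (fun j => ?_)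
    rcases eq_or_ne j i with rfl | h
    · simpa using h0
    · simp [Function.update_of_ne h]
  rcases Nat.eq_zero_or_pos R0 with h00 | hpos
  · omega
  refine le_antisymm ?_ hle
  have hui : u i ≤ (R0 : ℝ) / (R i : ℝ) := by
    refine le_trans hrej ?_
    exact div_le_div_of_nonneg_right (by exact_mod_cast hle) (by positivity) |>.trans le_rfl
  have hfilter : (S.filter (fun j => Function.update u i 0 j ≤ (R0 : ℝ) / (R j : ℝ)))
      = (S.filter (fun j => u j ≤ (R0 : ℝ) / (R j : ℝ))) := by
    apply Finset.filter_congr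
    intro j hj
    rcases eq_or_ne j i with rfl | h
    · simp only [Function.update_self]
      constructor
      · intro _; exact hui
      · intro _; positivity
    · simp [Function.update_of_ne h]
  have hspec := pruneCount_spec' S R (Function.update u i 0) hpos.ne'
  rw [← hR0, hfilter] at hspec
  exact le_pruneCount' (le_trans (pruneCount_le' _ _ _) le_rfl) hspec

/-! ### Measurability -/

lemma measurable_findGreatest_gen {α : Type*} [MeasurableSpace α] {Q : α → ℕ → Prop}
    [∀ a k, Decidable (Q a k)] (n : ℕ) (h : ∀ k, MeasurableSet {a | Q a k}) :
    Measurable fun a => Nat.findGreatest (Q a) n := by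
  induction n with
  | zero => simp only [Nat.findGreatest_zero]; exact measurable_const
  | succ n ih =>
      have : (fun a => Nat.findGreatest (Q a) (n + 1))
          = fun a => if Q a (n+1) then n+1 else Nat.findGreatest (Q a) n := by
        funext a
        rw [Nat.findGreatest_succ]
      rw [this]
      exact Measurable.ite (h (n+1)) measurable_const ih

lemma measurable_pruneCount' {α : Type*} [MeasurableSpace α] {m : ℕ}
    (S : α → Finset (Fin m)) (hS : ∀ j, MeasurableSet {a | j ∈ S a})
    (R : Fin m → α → ℕ) (hR : ∀ j, Measurable (R j))
    (V : Fin m → α → ℝ) (hV : ∀ j, Measurable (V j)) :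
    Measurable (fun a => pruneCount (S a) (fun j => R j a) (fun j => V j a)) := by
  unfold pruneCount
  apply measurable_findGreatest_gen
  intro r
  have hcard : ∀ a, ((S a).filter (fun j => V j a ≤ (r : ℝ) / (R j a : ℝ))).card
      = ∑ j : Fin m, if j ∈ S a ∧ V j a ≤ (r : ℝ) / (R j a : ℝ) then 1 else 0 := by
    intro a
    rw [← Finset.card_filter]
    congr 1
    ext j
    simp [Finset.mem_filter]
  have hmeas : Measurable (fun a =>
      ∑ j : Fin m, if j ∈ S a ∧ V j a ≤ (r : ℝ) / (R j a : ℝ) then (1:ℕ) else 0) := by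
    apply Finset.measurable_sum
    intro j _
    refine Measurable.ite ?_ measurable_const measurable_const
    refine MeasurableSet.inter (hS j) ?_
    exact measurableSet_le (hV j)
      ((measurable_from_top (f := fun n : ℕ => (r : ℝ) / (n : ℝ))).comp (hR j))
  simp only [hcard]
  exact measurableSet_le measurable_const hmeas

lemma measurable_inner_prune {n : ℕ} (S : Finset (Fin (n+1))) (R : Fin (n+1) → ℕ)
    (i : Fin (n+1)) :
    Measurable (fun v : Fin (n+1) → ℝ =>
      ENNReal.ofReal (if v i ≤ (pruneCount S R v : ℝ) / (R i : ℝ)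
        then (1:ℝ) / ((max (pruneCount S R v) 1 : ℕ) : ℝ) else 0)) := by
  have hpc : Measurable (fun v : Fin (n+1) → ℝ => pruneCount S R v) :=
    measurable_pruneCount' (α := Fin (n+1) → ℝ) (fun _ => S)
      (fun j => by by_cases h : j ∈ S <;> simp [h])
      (fun j _ => R j) (fun _ => measurable_const)
      (fun j v => v j) (fun j => measurable_pi_apply j)
  have hset : MeasurableSet {v : Fin (n+1) → ℝ | v i ≤ (pruneCount S R v : ℝ) / (R i : ℝ)} :=
    measurableSet_le (measurable_pi_apply i)
      ((measurable_from_top (f := fun k : ℕ => (k : ℝ) / (R i : ℝ))).comp hpc)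
  have hval : Measurable (fun v : Fin (n+1) → ℝ =>
      (1:ℝ) / ((max (pruneCount S R v) 1 : ℕ) : ℝ)) :=
    (measurable_from_top (f := fun k : ℕ => (1:ℝ) / ((max k 1 : ℕ) : ℝ))).comp hpc
  exact Measurable.ennreal_ofReal (Measurable.ite hset hval measurable_const)

lemma update_insertNth' {n : ℕ} (i : Fin (n+1)) (t c : ℝ) (w : Fin n → ℝ) :
    Function.update (Fin.insertNth (α := fun _ => ℝ) i t w) i c
      = Fin.insertNth (α := fun _ => ℝ) i c w := by
  funext j
  rcases eq_or_ne j i with rfl | h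
  · simp
  · rcases Fin.exists_succAbove_eq h with ⟨k, rfl⟩
    simp [Function.update_of_ne (Fin.succAbove_ne i k)]

/-! ### The inner integral bound -/

lemma inner_bound_prune {n : ℕ} (S : Finset (Fin (n+1))) (R : Fin (n+1) → ℕ)
    (hR : ∀ j, 1 ≤ R j) (i : Fin (n+1)) :
    ∫⁻ v, ENNReal.ofReal (if i ∈ S ∧ v i ≤ (pruneCount S R v : ℝ) / (R i : ℝ)
        then (1:ℝ) / ((max (pruneCount S R v) 1 : ℕ) : ℝ) else 0)
      ∂(Measure.pi fun _ : Fin (n+1) => volume.restrict (Set.Icc (0:ℝ) 1))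
      ≤ ENNReal.ofReal (if i ∈ S then (1:ℝ) / (R i : ℝ) else 0) := by
  have hνprob : IsProbabilityMeasure (volume.restrict (Set.Icc (0:ℝ) 1)) :=
    ⟨by simp [Real.volume_Icc]⟩
  by_cases hiS : i ∈ S
  swap
  · simp [hiS]
  simp only [hiS, true_and, if_true]
  have hgmeas := measurable_inner_prune S R i
  have hmp := (measurePreserving_piFinSuccAbove
    (fun _ : Fin (n+1) => volume.restrict (Set.Icc (0:ℝ) 1)) i).symm
  rw [← hmp.lintegral_comp hgmeas]
  have happ : ∀ p : ℝ × (Fin n → ℝ),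
      ((MeasurableEquiv.piFinSuccAbove (fun _ : Fin (n+1) => ℝ) i).symm p : Fin (n+1) → ℝ)
        = Fin.insertNth i p.1 p.2 := fun p => rfl
  simp only [happ]
  have hcompmeas : Measurable (fun a : ℝ × (Fin n → ℝ) =>
      ENNReal.ofReal (if (Fin.insertNth (α := fun _ => ℝ) i a.1 a.2) i ≤
          (pruneCount S R (Fin.insertNth i a.1 a.2) : ℝ) / (R i : ℝ)
        then (1:ℝ) / ((max (pruneCount S R (Fin.insertNth i a.1 a.2)) 1 : ℕ) : ℝ) else 0)) :=
    hgmeas.comp (MeasurableEquiv.piFinSuccAbove (fun _ : Fin (n+1) => ℝ) i).symm.measurable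
  rw [lintegral_prod_symm _ hcompmeas.aemeasurable]
  haveI : IsProbabilityMeasure (Measure.pi fun _ : Fin n => volume.restrict (Set.Icc (0:ℝ) 1)) :=
    by infer_instance
  have hinner : ∀ w : Fin n → ℝ,
      ∫⁻ t, ENNReal.ofReal (if (Fin.insertNth (α := fun _ => ℝ) i t w) i ≤
            (pruneCount S R (Fin.insertNth i t w) : ℝ) / (R i : ℝ)
          then (1:ℝ) / ((max (pruneCount S R (Fin.insertNth i t w)) 1 : ℕ) : ℝ) else 0)
        ∂(volume.restrict (Set.Icc (0:ℝ) 1))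
        ≤ ENNReal.ofReal ((1:ℝ) / (R i : ℝ)) := by
    intro w
    set R0 := pruneCount S R (Fin.insertNth i 0 w) with hR0
    set d : ℝ := (R0 : ℝ) / (R i : ℝ) with hd
    set a : ℝ := (1:ℝ) / ((max R0 1 : ℕ) : ℝ) with ha
    have hd0 : 0 ≤ d := by positivity
    have ha0 : 0 ≤ a := by positivity
    have hptwise : ∀ᵐ t ∂(volume.restrict (Set.Icc (0:ℝ) 1)),
        ENNReal.ofReal (if (Fin.insertNth (α := fun _ => ℝ) i t w) i ≤
              (pruneCount S R (Fin.insertNth i t w) : ℝ) / (R i : ℝ)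
            then (1:ℝ) / ((max (pruneCount S R (Fin.insertNth i t w)) 1 : ℕ) : ℝ) else 0)
          ≤ (Set.Iic d).indicator (fun _ => ENNReal.ofReal a) t := by
      filter_upwards [ae_restrict_mem measurableSet_Icc] with t ht
      have ht0 : (0:ℝ) ≤ t := ht.1
      simp only [Fin.insertNth_apply_same]
      by_cases hcond : t ≤ (pruneCount S R (Fin.insertNth i t w) : ℝ) / (R i : ℝ)
      · have heq : R0 = pruneCount S R (Fin.insertNth i t w) := by
          rw [hR0, ← update_insertNth' i t 0 w]
          exact pruneCount_update_zero' hiS (hR i)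
            (by simpa using ht0) (by simpa using hcond)
        have htd : t ∈ Set.Iic d := by rw [Set.mem_Iic, hd, heq]; exact hcond
        rw [Set.indicator_of_mem htd]
        simp only [hcond, if_true]
        rw [ha, heq]
      · simp only [hcond, if_false, ENNReal.ofReal_zero]
        exact zero_le
    calc ∫⁻ t, ENNReal.ofReal (if (Fin.insertNth (α := fun _ => ℝ) i t w) i ≤
              (pruneCount S R (Fin.insertNth i t w) : ℝ) / (R i : ℝ)
            then (1:ℝ) / ((max (pruneCount S R (Fin.insertNth i t w)) 1 : ℕ) : ℝ) else 0)
          ∂(volume.restrict (Set.Icc (0:ℝ) 1))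
        ≤ ∫⁻ t, (Set.Iic d).indicator (fun _ => ENNReal.ofReal a) t
            ∂(volume.restrict (Set.Icc (0:ℝ) 1)) := lintegral_mono_ae hptwise
      _ = ENNReal.ofReal a * (volume.restrict (Set.Icc (0:ℝ) 1)) (Set.Iic d) := by
          rw [lintegral_indicator measurableSet_Iic]; simp [mul_comm]
      _ ≤ ENNReal.ofReal a * ENNReal.ofReal d := by
          gcongr
          rw [Measure.restrict_apply measurableSet_Iic]
          refine le_trans (measure_mono (fun t ht => Set.mem_Icc.mpr ⟨ht.2.1, ht.1⟩)) ?_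
          rw [Real.volume_Icc]; simp
      _ = ENNReal.ofReal (a * d) := (ENNReal.ofReal_mul ha0).symm
      _ ≤ ENNReal.ofReal ((1:ℝ) / (R i : ℝ)) := by
          apply ENNReal.ofReal_le_ofReal
          have hRi : (0:ℝ) < (R i : ℝ) := by exact_mod_cast hR i
          have hmax : (0:ℝ) < ((max R0 1 : ℕ) : ℝ) := by
            exact_mod_cast lt_of_lt_of_le zero_lt_one (le_max_right R0 1)
          have hR0max : (R0 : ℝ) ≤ ((max R0 1 : ℕ) : ℝ) := by
            exact_mod_cast le_max_left R0 1
          rw [ha, hd, div_mul_div_comm, one_mul, div_le_div_iff₀ (by positivity) hRi]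
          nlinarith [hRi.le, hmax.le]
  refine le_trans (lintegral_mono (fun w => hinner w)) ?_
  simp
/-- the key inequality controlling the randomized pruning step: if
`u_1, …, u_m` are i.i.d. `Uniform(0,1)`, independent of the data `X`, then for each fixed `i`,
`E[1{i ∈ ℛ₊(X)}·1{u_i ≤ R(X,u)/R̂_i(X)} / max(R(X,u),1)] ≤ E[1{i ∈ ℛ₊(X)} / R̂_i(X)]`. -/
theorem pruning_key_inequality
    {Ω E : Type*} [MeasurableSpace Ω] [MeasurableSpace E]
    (P : Measure Ω) [IsProbabilityMeasure P]
    {m : ℕ} (hm : 0 < m)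
    (X : Ω → E) (hX : Measurable X)
    (Rplus : E → Finset (Fin m)) (hRplus : ∀ i, MeasurableSet {x : E | i ∈ Rplus x})
    (Rhat : Fin m → E → ℕ) (hRmeas : ∀ i, Measurable (Rhat i))
    (hRval : ∀ i x, Rhat i x ∈ Set.Icc 1 m)
    (u : Fin m → Ω → ℝ) (humeas : ∀ i, Measurable (u i))
    (huindep : iIndepFun u P)
    (huunif : ∀ i, P.map (u i) = volume.restrict (Set.Icc (0 : ℝ) 1))
    (hXu : IndepFun X (fun ω j => u j ω) P)
    (i : Fin m) :
    ∫ ω, (if i ∈ Rplus (X ω) ∧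
            u i ω ≤ (pruneCount (Rplus (X ω)) (fun j => Rhat j (X ω)) (fun j => u j ω) : ℝ) /
              (Rhat i (X ω) : ℝ)
          then (1 : ℝ) /
            ((max (pruneCount (Rplus (X ω)) (fun j => Rhat j (X ω)) (fun j => u j ω)) 1 : ℕ) : ℝ)
          else 0) ∂P
      ≤ ∫ ω, (if i ∈ Rplus (X ω) then (1 : ℝ) / (Rhat i (X ω) : ℝ) else 0) ∂P := by
  obtain ⟨n, rfl⟩ : ∃ n, m = n + 1 := ⟨m - 1, by omega⟩
  have hνprob : IsProbabilityMeasure (volume.restrict (Set.Icc (0:ℝ) 1)) :=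
    ⟨by simp [Real.volume_Icc]⟩
  set ν : Measure ℝ := volume.restrict (Set.Icc (0:ℝ) 1) with hν
  set μU : Measure (Fin (n+1) → ℝ) := Measure.pi fun _ => ν with hμU
  haveI : IsProbabilityMeasure μU := by rw [hμU]; infer_instance
  haveI : IsProbabilityMeasure (P.map X) := Measure.isProbabilityMeasure_map hX.aemeasurable
  have hU : Measurable (fun ω => fun j => u j ω) := measurable_pi_lambda _ humeas
  -- step 1: law of the uniforms is the product measure
  have h1 : P.map (fun ω j => u j ω) = μU := by
    rw [hμU]
    refine (Measure.pi_eq (μ := fun _ => ν) fun s hs => ?_).symm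
    rw [Measure.map_apply hU (MeasurableSet.univ_pi hs)]
    have hpre : (fun ω j => u j ω) ⁻¹' (Set.univ.pi s) = ⋂ j ∈ Finset.univ, u j ⁻¹' s j := by
      ext ω; simp [Set.mem_pi]
    rw [hpre, huindep.measure_inter_preimage_eq_mul Finset.univ (fun j _ => hs j)]
    refine Finset.prod_congr rfl fun j _ => ?_
    rw [← Measure.map_apply (humeas j) (hs j), huunif j]
  -- step 2: joint law
  have h2 : P.map (fun ω => (X ω, fun j => u j ω)) = (P.map X).prod μU := by
    rw [← h1]
    exact (indepFun_iff_map_prod_eq_prod_map_map hX.aemeasurable hU.aemeasurable).mp hXu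
  -- the integrands on the product space
  set F : E × (Fin (n+1) → ℝ) → ℝ := fun p =>
    if i ∈ Rplus p.1 ∧ p.2 i ≤ (pruneCount (Rplus p.1) (fun j => Rhat j p.1) p.2 : ℝ) /
        (Rhat i p.1 : ℝ)
    then (1:ℝ) / ((max (pruneCount (Rplus p.1) (fun j => Rhat j p.1) p.2) 1 : ℕ) : ℝ)
    else 0 with hF
  set G : E → ℝ := fun x => if i ∈ Rplus x then (1:ℝ) / (Rhat i x : ℝ) else 0 with hG
  have hpc : Measurable (fun p : E × (Fin (n+1) → ℝ) =>
      pruneCount (Rplus p.1) (fun j => Rhat j p.1) p.2) :=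
    measurable_pruneCount' (α := E × (Fin (n+1) → ℝ)) (fun p => Rplus p.1)
      (fun j => measurable_fst (hRplus j))
      (fun j p => Rhat j p.1) (fun j => (hRmeas j).comp measurable_fst)
      (fun j p => p.2 j) (fun j => (measurable_pi_apply j).comp measurable_snd)
  have hFmeas : Measurable F := by
    rw [hF]
    refine Measurable.ite ?_ ?_ measurable_const
    · refine MeasurableSet.inter (measurable_fst (hRplus i)) ?_
      refine measurableSet_le ((measurable_pi_apply i).comp measurable_snd) ?_
      exact Measurable.div ((measurable_from_top (f := fun k : ℕ => (k:ℝ))).comp hpc)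
        ((measurable_from_top (f := fun k : ℕ => (k:ℝ))).comp ((hRmeas i).comp measurable_fst))
    · exact (measurable_from_top (f := fun k : ℕ => (1:ℝ) / ((max k 1 : ℕ) : ℝ))).comp hpc
  have hGmeas : Measurable G := by
    rw [hG]
    refine Measurable.ite (hRplus i) ?_ measurable_const
    exact (measurable_from_top (f := fun k : ℕ => (1:ℝ) / (k:ℝ))).comp (hRmeas i)
  have hFnn : ∀ p, 0 ≤ F p := by
    intro p; rw [hF]; dsimp only; split
    · positivity
    · exact le_rfl
  have hGnn : ∀ x, 0 ≤ G x := by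
    intro x; rw [hG]; dsimp only; split
    · positivity
    · exact le_rfl
  -- rewrite both sides as integrals over the image laws
  have hpair : Measurable (fun ω => (X ω, fun j => u j ω)) := hX.prodMk hU
  have hL : (∫ ω, (if i ∈ Rplus (X ω) ∧
            u i ω ≤ (pruneCount (Rplus (X ω)) (fun j => Rhat j (X ω)) (fun j => u j ω) : ℝ) /
              (Rhat i (X ω) : ℝ)
          then (1 : ℝ) /
            ((max (pruneCount (Rplus (X ω)) (fun j => Rhat j (X ω)) (fun j => u j ω)) 1 : ℕ) : ℝ)
          else 0) ∂P) = ∫ p, F p ∂((P.map X).prod μU) := by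
    rw [← h2, integral_map hpair.aemeasurable]
    rw [h2]; exact hFmeas.aestronglyMeasurable
  have hRHS : (∫ ω, (if i ∈ Rplus (X ω) then (1 : ℝ) / (Rhat i (X ω) : ℝ) else 0) ∂P)
      = ∫ x, G x ∂(P.map X) := by
    rw [integral_map hX.aemeasurable hGmeas.aestronglyMeasurable]
  rw [hL, hRHS]
  -- pass to lintegrals
  rw [integral_eq_lintegral_of_nonneg_ae (Filter.Eventually.of_forall hFnn)
      hFmeas.aestronglyMeasurable,
    integral_eq_lintegral_of_nonneg_ae (Filter.Eventually.of_forall hGnn)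
      hGmeas.aestronglyMeasurable]
  have hGfin : ∫⁻ x, ENNReal.ofReal (G x) ∂(P.map X) ≠ ⊤ := by
    refine ne_top_of_le_ne_top (b := 1) (by simp) ?_
    calc ∫⁻ x, ENNReal.ofReal (G x) ∂(P.map X) ≤ ∫⁻ _, 1 ∂(P.map X) := by
          refine lintegral_mono fun x => ?_
          rw [hG]; dsimp only; split
          · refine ENNReal.ofReal_le_of_le_toReal ?_
            simp only [ENNReal.toReal_one]
            have h1 : (1:ℝ) ≤ (Rhat i x : ℝ) := by exact_mod_cast (hRval i x).1
            rw [div_le_one (by linarith)]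
            exact h1.trans le_rfl |>.trans (by linarith)
          · simp
      _ = 1 := by simp
  refine ENNReal.toReal_mono hGfin ?_
  -- the key lintegral inequality
  rw [lintegral_prod _ hFmeas.ennreal_ofReal.aemeasurable]
  refine lintegral_mono fun x => ?_
  have := inner_bound_prune (Rplus x) (fun j => Rhat j x) (fun j => (hRval j x).1) i
  rw [hμU, hν]
  exact this
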